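/- Let $\tau : X \to K^\times$ be a group homomorphism such that $\tau(\alpha) - 1 \in \mathfrak{p} \setminus \{0\}$ for every $\alpha \in R$, and set $n_\alpha = v(1 - \tau(\alpha)) \ge 1$. Then $n_{-\alpha} = n_\alpha$ for all $\alpha \in R$, and $$\sum_{J \subseteq I_0} (-1)^{\# J} \sum_{w \in {}^J\mathcal{W}} \Big( \prod_{\alpha \in R^+ \setminus R_J^+} |\tau(w^{-1}(\alpha))| \Big)^{1/2} \Big( \prod_{\alpha \in R \setminus R_J} |1 - \tau(w^{-1}(\alpha))| \Big)^{-1/2} = \sum_{J \subseteq I_0} (-1)^{\# J} \sum_{w \in {}^J\mathcal{W}} q^{\sum_{\alpha \in R} n_\alpha/2 - \sum_{\alpha \in R_J} n_{w^{-1}(\alpha)}/2}.$$ Moreover this quantity equals $\#(\mathcal{W})\, q^{\sum_{\alpha \in R} n_\alpha/2}$ plus a finite integer linear combination of powers $q^{e/2}$ with $e < \sum_{\alpha \in R} n_\alpha$ (the terms with $J \ne \emptyset$ all have strictly smaller exponent). -/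

import Mathlib

/-!
Statement 1 (Section 2.5 of Kim–Lusztig).  For `τ` a topologically unipotent very
regular element of the split torus (i.e. `τ(α) - 1 ∈ 𝔭 \ {0}` for all roots `α`),
with `n_α := v(1 - τ(α)) ≥ 1`, the Casselman expression for the Steinberg character
equals `∑_J (-1)^{#J} ∑_{w ∈ ᴶ𝒲} q^{∑_{α∈R} n_α/2 - ∑_{α∈R_J} n_{w⁻¹α}/2}`, and this
equals `#𝒲 · q^{∑_{α∈R} n_α/2}` plus an integer combination of strictly smaller
half-powers of `q`.
-/

open scoped Classical

noncomputable section

/-- The full set of roots `R = R⁺ ∪ (-R⁺)`. -/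
def rootsOf {X : Type*} [AddCommGroup X] (Rp : Finset X) : Finset X :=
  Rp ∪ Rp.image (fun a => -a)

/-- The set of negative roots `R⁻ = -R⁺`. -/
def negRootsOf {X : Type*} [AddCommGroup X] (Rp : Finset X) : Finset X :=
  Rp.image (fun a => -a)

/-- The length of `w` with respect to the generating set of simple reflections:
the least `n` such that `w` is a product of `n` simple reflections. -/
def wordLen {W : Type*} [Group W] {I0 : Type*} (s : I0 → W) (w : W) : ℕ :=
  sInf {n : ℕ | ∃ l : List I0, l.length = n ∧ (l.map s).prod = w}

/-- The standard parabolic subgroup `𝒲_J` generated by the simple reflections in `J`. -/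
def WJ {W : Type*} [Group W] {I0 : Type*} (s : I0 → W) (J : Finset I0) : Subgroup W :=
  Subgroup.closure (s '' (J : Set I0))

/-- `R_J`, the set of roots of the form `u • α_i` with `u ∈ 𝒲_J`, `i ∈ J`, as a set. -/
def RJset {X : Type*} [AddCommGroup X] {W : Type*} [Group W] [DistribMulAction W X]
    {I0 : Type*} (sα : I0 → X) (s : I0 → W) (J : Finset I0) : Set X :=
  {x | ∃ u ∈ WJ s J, ∃ i ∈ J, x = u • sα i}

/-- `R_J⁺ = R_J ∩ R⁺`. -/
def RJp {X : Type*} [AddCommGroup X] {W : Type*} [Group W] [DistribMulAction W X]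
    {I0 : Type*} (Rp : Finset X) (sα : I0 → X) (s : I0 → W) (J : Finset I0) : Finset X :=
  Rp.filter (fun a => a ∈ RJset sα s J)

/-- `R_J` as a finite set of roots. -/
def RJfull {X : Type*} [AddCommGroup X] {W : Type*} [Group W] [DistribMulAction W X]
    {I0 : Type*} (Rp : Finset X) (sα : I0 → X) (s : I0 → W) (J : Finset I0) : Finset X :=
  (rootsOf Rp).filter (fun a => a ∈ RJset sα s J)

/-- `ᴶ𝒲`, the set of elements of the Weyl group of minimal length in their coset `𝒲_J w`. -/
def JW {W : Type*} [Group W] [Fintype W] {I0 : Type*} (s : I0 → W) (J : Finset I0) :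
    Finset W :=
  Finset.univ.filter (fun w => ∀ u ∈ WJ s J, wordLen s w ≤ wordLen s (u * w))

/-- The axioms of a (reduced) root system with Weyl group `W`, positive roots `Rp`,
simple roots `sα i` and simple reflections `s i`. -/
structure IsRootSystemData {X : Type*} [AddCommGroup X] {W : Type*} [Group W]
    [DistribMulAction W X] {I0 : Type*} (Rp : Finset X) (sα : I0 → X) (s : I0 → W) :
    Prop where
  neg_notMem : ∀ a ∈ Rp, -a ∉ Rp
  reduced : ∀ a ∈ rootsOf Rp, ∀ n : ℤ, n • a ∈ rootsOf Rp → n = 1 ∨ n = -1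
  stable : ∀ (w : W), ∀ a ∈ rootsOf Rp, w • a ∈ rootsOf Rp
  simple_mem : ∀ i, sα i ∈ Rp
  refl_simple : ∀ i, s i • sα i = -sα i
  refl_perm : ∀ i, ∀ a ∈ Rp, a ≠ sα i → s i • a ∈ Rp
  gen : Subgroup.closure (Set.range s) = ⊤
  faithful : ∀ w : W, (∀ x : X, w • x = x) → w = 1

private lemma prodZpowSum' {α : Type*} (s : Finset α) (f : α → ℤ) (q : ℝ) (hq : q ≠ 0) :
    ∏ a ∈ s, q ^ (f a) = q ^ (∑ a ∈ s, f a) := by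
  classical
  induction s using Finset.cons_induction with
  | empty => simp
  | cons a s ha ih => rw [Finset.prod_cons, Finset.sum_cons, zpow_add₀ hq, ih]

theorem steinberg_character_topologically_unipotent
    {X : Type*} [AddCommGroup X]
    {W : Type*} [Group W] [Fintype W] [DistribMulAction W X]
    {I0 : Type*} [Fintype I0]
    (Rp : Finset X) (sα : I0 → X) (s : I0 → W)
    (hRS : IsRootSystemData Rp sα s)
    {K : Type*} [Field K]
    -- the normalized valuation of the nonarchimedean local field `K`
    (v : K → ℤ)
    (hv_mul : ∀ x y : K, x ≠ 0 → y ≠ 0 → v (x * y) = v x + v y)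
    (hv_min : ∀ x y : K, x ≠ 0 → y ≠ 0 → x + y ≠ 0 → min (v x) (v y) ≤ v (x + y))
    (hv_surj : ∀ n : ℤ, ∃ x : K, x ≠ 0 ∧ v x = n)
    -- `q` is the cardinality of the residue field of `K`
    (q : ℝ) (hq : 1 < q)
    -- `τ` is a point of the split torus with `τ(α) - 1 ∈ 𝔭 \ {0}` for all roots `α`
    (τ : X → Kˣ) (hτ : ∀ a b : X, τ (a + b) = τ a * τ b)
    (hreg : ∀ a ∈ rootsOf Rp, (τ a : K) - 1 ≠ 0 ∧ 1 ≤ v ((τ a : K) - 1)) :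
    -- `n_α := v(1 - τ(α))`
    (∀ a ∈ rootsOf Rp, v (1 - ((τ (-a) : K))) = v (1 - ((τ a : K)))) ∧
    (∑ J : Finset I0, (-1 : ℝ) ^ J.card *
        ∑ w ∈ JW s J,
          Real.sqrt (∏ a ∈ Rp \ RJp Rp sα s J, q ^ (-v ((τ (w⁻¹ • a) : K))))
            * (Real.sqrt
                (∏ a ∈ rootsOf Rp \ RJfull Rp sα s J,
                  q ^ (-v (1 - ((τ (w⁻¹ • a) : K))))))⁻¹
      = ∑ J : Finset I0, (-1 : ℝ) ^ J.card *
          ∑ w ∈ JW s J,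
            q ^ ((∑ a ∈ rootsOf Rp, (v (1 - ((τ a : K))) : ℝ)) / 2
                - (∑ a ∈ RJfull Rp sα s J, (v (1 - ((τ (w⁻¹ • a) : K))) : ℝ)) / 2)) ∧
    (∃ (m : ℕ) (c : Fin m → ℤ) (e : Fin m → ℤ),
      (∀ k, e k < ∑ a ∈ rootsOf Rp, v (1 - ((τ a : K)))) ∧
      (∑ J : Finset I0, (-1 : ℝ) ^ J.card *
          ∑ w ∈ JW s J,
            q ^ ((∑ a ∈ rootsOf Rp, (v (1 - ((τ a : K))) : ℝ)) / 2
                - (∑ a ∈ RJfull Rp sα s J, (v (1 - ((τ (w⁻¹ • a) : K))) : ℝ)) / 2))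
        = (Fintype.card W : ℝ) * q ^ ((∑ a ∈ rootsOf Rp, (v (1 - ((τ a : K))) : ℝ)) / 2)
          + ∑ k : Fin m, (c k : ℝ) * q ^ ((e k : ℝ) / 2)) := by
  classical
  have hq0 : (0:ℝ) < q := lt_trans one_pos hq
  have hqne : q ≠ 0 := ne_of_gt hq0
  -- basic multiplicativity facts
  have hτ0 : τ 0 = 1 := by
    have h := hτ 0 0
    rw [add_zero] at h
    exact (mul_left_cancel (a := τ 0) (by rw [← h, mul_one])).symm
  have hτneg : ∀ a : X, (τ (-a) : K) = (τ a : K)⁻¹ := by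
    intro a
    have h := hτ a (-a)
    rw [add_neg_cancel, hτ0] at h
    have : τ (-a) = (τ a)⁻¹ := eq_inv_of_mul_eq_one_right h.symm
    rw [this]
    exact Units.val_inv_eq_inv_val _
  -- valuation facts
  have v1 : v (1 : K) = 0 := by
    have h := hv_mul 1 1 one_ne_zero one_ne_zero
    rw [one_mul] at h; omega
  have vm1 : v (-1 : K) = 0 := by
    have h := hv_mul (-1) (-1) (by norm_num) (by norm_num)
    rw [neg_mul_neg, one_mul, v1] at h; omega
  have vneg : ∀ x : K, x ≠ 0 → v (-x) = v x := by
    intro x hx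
    have h := hv_mul (-1) x (by norm_num) hx
    rw [neg_one_mul, vm1, zero_add] at h
    exact h
  have hτne : ∀ a : X, (τ a : K) ≠ 0 := fun a => Units.ne_zero _
  have hne : ∀ a ∈ rootsOf Rp, (1 : K) - τ a ≠ 0 := by
    intro a ha h
    apply (hreg a ha).1
    have : ((τ a : K) - 1) = -((1:K) - τ a) := by ring
    rw [this, h, neg_zero]
  have hv1τ : ∀ a ∈ rootsOf Rp, 1 ≤ v (1 - (τ a : K)) := by
    intro a ha
    have h := (hreg a ha).2
    have h2 := vneg ((τ a : K) - 1) (hreg a ha).1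
    rw [neg_sub] at h2
    omega
  have vτ : ∀ a ∈ rootsOf Rp, v (τ a : K) = 0 := by
    intro a ha
    have hne1 := (hreg a ha).1
    have h1 : 0 ≤ v (τ a : K) := by
      have h := hv_min 1 ((τ a : K) - 1) one_ne_zero hne1
        (by rw [show (1:K) + ((τ a : K) - 1) = τ a by ring]; exact hτne a)
      rw [show (1:K) + ((τ a : K) - 1) = τ a by ring, v1] at h
      have h2 := (hreg a ha).2
      rcases min_le_iff.mp h with h' | h' <;> omega
    have h2 : v (τ a : K) ≤ 0 := by
      have h := hv_min (τ a) (1 - τ a) (hτne a) (hne a ha)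
        (by rw [show (τ a : K) + (1 - τ a) = 1 by ring]; exact one_ne_zero)
      rw [show (τ a : K) + (1 - τ a) = 1 by ring, v1] at h
      have h2 := hv1τ a ha
      rcases min_le_iff.mp h with h' | h' <;> omega
    omega
  have vτinv : ∀ a ∈ rootsOf Rp, v ((τ a : K)⁻¹) = 0 := by
    intro a ha
    have h := hv_mul (τ a) (τ a : K)⁻¹ (hτne a) (inv_ne_zero (hτne a))
    rw [mul_inv_cancel₀ (hτne a), v1, vτ a ha] at h
    omega
  -- Part 1
  have part1 : ∀ a ∈ rootsOf Rp, v (1 - ((τ (-a) : K))) = v (1 - ((τ a : K))) := by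
    intro a ha
    have key : (1 : K) - (τ (-a) : K) = -((1 - (τ a : K)) * (τ a : K)⁻¹) := by
      rw [hτneg a]
      field_simp
      ring
    rw [key, vneg _ (by exact mul_ne_zero (hne a ha) (inv_ne_zero (hτne a))),
      hv_mul _ _ (hne a ha) (inv_ne_zero (hτne a)), vτinv a ha, add_zero]
  -- membership facts
  have hRpR : ∀ a ∈ Rp, a ∈ rootsOf Rp := fun a ha => Finset.mem_union_left _ ha
  have hRJR : ∀ J, RJfull Rp sα s J ⊆ rootsOf Rp := fun J => Finset.filter_subset _ _
  have hperm : ∀ w : W, ∑ a ∈ rootsOf Rp, v (1 - ((τ (w⁻¹ • a) : K)))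
      = ∑ a ∈ rootsOf Rp, v (1 - ((τ a : K))) := by
    intro w
    apply Finset.sum_nbij' (i := fun a => w⁻¹ • a) (j := fun a => w • a)
    · intro a ha; exact hRS.stable w⁻¹ a ha
    · intro a ha; exact hRS.stable w a ha
    · intro a _; exact smul_inv_smul w a
    · intro a _; exact inv_smul_smul w a
    · intro a _; rfl
  -- per-term computation for part 2
  have term_eq : ∀ (J : Finset I0) (w : W),
      Real.sqrt (∏ a ∈ Rp \ RJp Rp sα s J, q ^ (-v ((τ (w⁻¹ • a) : K))))
        * (Real.sqrt (∏ a ∈ rootsOf Rp \ RJfull Rp sα s J,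
            q ^ (-v (1 - ((τ (w⁻¹ • a) : K))))))⁻¹
      = q ^ ((∑ a ∈ rootsOf Rp, (v (1 - ((τ a : K))) : ℝ)) / 2
          - (∑ a ∈ RJfull Rp sα s J, (v (1 - ((τ (w⁻¹ • a) : K))) : ℝ)) / 2) := by
    intro J w
    have h1 : ∏ a ∈ Rp \ RJp Rp sα s J, q ^ (-v ((τ (w⁻¹ • a) : K))) = 1 := by
      apply Finset.prod_eq_one
      intro a ha
      have haR : a ∈ rootsOf Rp := hRpR a (Finset.mem_sdiff.mp ha).1
      rw [vτ _ (hRS.stable w⁻¹ a haR), neg_zero, zpow_zero]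
    have hPS : ∑ a ∈ rootsOf Rp \ RJfull Rp sα s J, (-v (1 - ((τ (w⁻¹ • a) : K))))
        = -((∑ a ∈ rootsOf Rp, v (1 - ((τ a : K))))
            - ∑ a ∈ RJfull Rp sα s J, v (1 - ((τ (w⁻¹ • a) : K)))) := by
      have h := Finset.sum_sdiff (f := fun a => v (1 - ((τ (w⁻¹ • a) : K)))) (hRJR J)
      rw [Finset.sum_neg_distrib, ← hperm w, ← h]
      ring
    have h2 : ∏ a ∈ rootsOf Rp \ RJfull Rp sα s J, q ^ (-v (1 - ((τ (w⁻¹ • a) : K))))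
        = q ^ (((-((∑ a ∈ rootsOf Rp, v (1 - ((τ a : K))))
            - ∑ a ∈ RJfull Rp sα s J, v (1 - ((τ (w⁻¹ • a) : K)))) : ℤ) : ℝ)) := by
      rw [prodZpowSum' _ _ q hqne, hPS, Real.rpow_intCast]
    rw [h1, Real.sqrt_one, one_mul, h2, Real.sqrt_eq_rpow, ← Real.rpow_mul hq0.le,
      ← Real.rpow_neg hq0.le]
    congr 1
    push_cast
    ring
  refine ⟨part1, ?_, ?_⟩
  · exact Finset.sum_congr rfl fun J _ => by
      rw [Finset.sum_congr rfl fun w _ => term_eq J w]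
  -- Part 3
  · have hJW0 : JW s (∅ : Finset I0) = Finset.univ := by
      rw [JW]
      apply Finset.filter_true_of_mem
      intro w _ u hu
      have hWJ : WJ s (∅ : Finset I0) = ⊥ := by
        simp [WJ]
      rw [hWJ, Subgroup.mem_bot] at hu
      rw [hu, one_mul]
    have hRJ0 : RJfull Rp sα s (∅ : Finset I0) = ∅ := by
      rw [Finset.eq_empty_iff_forall_notMem]
      intro a ha
      obtain ⟨-, u, hu, i, hi, -⟩ := Finset.mem_filter.mp ha
      exact absurd hi (Finset.notMem_empty i)
    have hQpos : ∀ (J : Finset I0), J ≠ ∅ → ∀ w : W,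
        0 < ∑ a ∈ RJfull Rp sα s J, v (1 - ((τ (w⁻¹ • a) : K))) := by
      intro J hJ w
      obtain ⟨i, hi⟩ := Finset.nonempty_iff_ne_empty.mpr hJ
      apply Finset.sum_pos'
      · intro a ha
        have haR : a ∈ rootsOf Rp := hRJR J ha
        have := hv1τ _ (hRS.stable w⁻¹ a haR)
        omega
      · refine ⟨sα i, ?_, ?_⟩
        · refine Finset.mem_filter.mpr ⟨hRpR _ (hRS.simple_mem i), 1, Subgroup.one_mem _, i, hi, ?_⟩
          rw [one_smul]
        · have := hv1τ _ (hRS.stable w⁻¹ (sα i) (hRpR _ (hRS.simple_mem i)))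
          omega
    set T := ({J : Finset I0 // J ≠ ∅} × W) with hT
    set eqv : T ≃ Fin (Fintype.card T) := Fintype.equivFin T with heqv
    refine ⟨Fintype.card T,
      fun k => if (eqv.symm k).2 ∈ JW s ((eqv.symm k).1 : Finset I0) then
          (-1 : ℤ) ^ (((eqv.symm k).1 : Finset I0)).card else 0,
      fun k => (∑ a ∈ rootsOf Rp, v (1 - ((τ a : K))))
        - ∑ a ∈ RJfull Rp sα s ((eqv.symm k).1 : Finset I0),
            v (1 - ((τ (((eqv.symm k).2)⁻¹ • a) : K))), ?_, ?_⟩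
    · intro k
      have h := hQpos ((eqv.symm k).1 : Finset I0) (eqv.symm k).1.2 (eqv.symm k).2
      show (∑ a ∈ rootsOf Rp, v (1 - ((τ a : K))))
          - ∑ a ∈ RJfull Rp sα s ((eqv.symm k).1 : Finset I0),
              v (1 - ((τ (((eqv.symm k).2)⁻¹ • a) : K)))
        < ∑ a ∈ rootsOf Rp, v (1 - ((τ a : K)))
      omega
    · rw [← Finset.add_sum_erase _ _ (Finset.mem_univ (∅ : Finset I0))]
      congr 1
      · rw [hJW0, hRJ0]
        simp only [Finset.card_empty, pow_zero, one_mul, Finset.sum_empty, zero_div, sub_zero]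
        rw [Finset.sum_const, Finset.card_univ, nsmul_eq_mul]
      · -- sum over nonempty J
        rw [Finset.sum_subtype (p := fun J : Finset I0 => J ≠ ∅)
          (Finset.univ.erase ∅) (fun x => by simp [Finset.mem_erase])]
        have hcomp := Equiv.sum_comp eqv.symm
          (fun t : T => ((if t.2 ∈ JW s (t.1 : Finset I0) then
              (-1 : ℤ) ^ ((t.1 : Finset I0)).card else 0 : ℤ) : ℝ)
            * q ^ ((((∑ a ∈ rootsOf Rp, v (1 - ((τ a : K))))
                - ∑ a ∈ RJfull Rp sα s (t.1 : Finset I0),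
                    v (1 - ((τ ((t.2)⁻¹ • a) : K))) : ℤ) : ℝ) / 2))
        rw [show (∑ k : Fin (Fintype.card T),
            ((if (eqv.symm k).2 ∈ JW s ((eqv.symm k).1 : Finset I0) then
                (-1 : ℤ) ^ (((eqv.symm k).1 : Finset I0)).card else 0 : ℤ) : ℝ)
              * q ^ ((((∑ a ∈ rootsOf Rp, v (1 - ((τ a : K))))
                  - ∑ a ∈ RJfull Rp sα s ((eqv.symm k).1 : Finset I0),
                      v (1 - ((τ (((eqv.symm k).2)⁻¹ • a) : K))) : ℤ) : ℝ) / 2)) = _ from hcomp]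
        rw [Fintype.sum_prod_type]
        apply Finset.sum_congr rfl
        intro J' _
        rw [Finset.mul_sum]
        rw [show (∑ w : W, ((if w ∈ JW s (J' : Finset I0) then
              (-1 : ℤ) ^ ((J' : Finset I0)).card else 0 : ℤ) : ℝ)
            * q ^ ((((∑ a ∈ rootsOf Rp, v (1 - ((τ a : K))))
                - ∑ a ∈ RJfull Rp sα s (J' : Finset I0),
                    v (1 - ((τ (w⁻¹ • a) : K))) : ℤ) : ℝ) / 2))
          = ∑ w : W, (if w ∈ JW s (J' : Finset I0) then
              ((-1 : ℝ) ^ ((J' : Finset I0)).card)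
                * q ^ ((((∑ a ∈ rootsOf Rp, v (1 - ((τ a : K))))
                    - ∑ a ∈ RJfull Rp sα s (J' : Finset I0),
                        v (1 - ((τ (w⁻¹ • a) : K))) : ℤ) : ℝ) / 2) else 0) from
          Finset.sum_congr rfl fun w _ => by split <;> push_cast <;> ring]
        rw [Finset.sum_ite_mem, Finset.univ_inter]
        apply Finset.sum_congr rfl
        intro w _
        congr 1
        push_cast
        ring
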